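/- Let S be a finite set, C a finite set with weights p summing to 1, and clusters q(c) ⊆ S nonempty. Define Γ_SMDP as the set of γ(s') = ∑_c θ_c(s') p(c) over families of distributions θ_c supported on q(c). Then Γ_SMDP is a nonempty convex compact subset of the probability simplex on S, and its extreme points are contained in the set of distributions of the form γ(s') = ∑_c p(c) · 1[σ(c) = s'] for selection functions σ with σ(c) ∈ q(c). -/

import Mathlib

open scoped Classical

/-- The SMDP ambiguity set: total distributions induced by conditional
distributions `θ c` supported on the clusters `q c`, mixed with weights `p`. -/
def smdpSet {S C : Type*} [Fintype S] [Fintype C]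
    (p : C → ℝ) (q : C → Finset S) : Set (S → ℝ) :=
  { γ | ∃ θ : C → S → ℝ,
      (∀ c s, 0 ≤ θ c s) ∧ (∀ c, ∑ s, θ c s = 1) ∧
      (∀ c s, θ c s ≠ 0 → s ∈ q c) ∧
      ∀ s, γ s = ∑ c, θ c s * p c }

/-- Dirac selection distributions. -/
def smdpDirac {S C : Type*} [Fintype S] [Fintype C]
    (p : C → ℝ) (q : C → Finset S) : Set (S → ℝ) :=
  { γ : S → ℝ | ∃ σ : C → S, (∀ c, σ c ∈ q c) ∧
      ∀ s, γ s = ∑ c, if σ c = s then p c else 0 }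

lemma smdpDirac_subset {S C : Type*} [Fintype S] [Fintype C]
    (p : C → ℝ) (q : C → Finset S) : smdpDirac p q ⊆ smdpSet p q := by
  rintro γ ⟨σ, hσ, hγ⟩
  refine ⟨fun c s => if σ c = s then 1 else 0, ?_, ?_, ?_, ?_⟩
  · intro c s; by_cases h : σ c = s <;> simp [h]
  · intro c; simp
  · intro c s h
    by_cases hcs : σ c = s
    · exact hcs ▸ hσ c
    · simp [hcs] at h
  · intro s; rw [hγ s]; apply Finset.sum_congr rfl; intro c _
    by_cases hcs : σ c = s <;> simp [hcs]

lemma smdpSet_convex {S C : Type*} [Fintype S] [Fintype C]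
    (p : C → ℝ) (q : C → Finset S) : Convex ℝ (smdpSet p q) := by
  rintro γ₁ ⟨θ₁, h₁0, h₁1, h₁q, h₁γ⟩ γ₂ ⟨θ₂, h₂0, h₂1, h₂q, h₂γ⟩ a b ha hb hab
  refine ⟨fun c s => a * θ₁ c s + b * θ₂ c s, ?_, ?_, ?_, ?_⟩
  · intro c s
    have := h₁0 c s; have := h₂0 c s; positivity
  · intro c
    simp [Finset.sum_add_distrib, ← Finset.mul_sum, h₁1 c, h₂1 c, hab]
  · intro c s h
    by_contra hs
    have e1 : θ₁ c s = 0 := by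
      by_contra h'; exact hs (h₁q c s h')
    have e2 : θ₂ c s = 0 := by
      by_contra h'; exact hs (h₂q c s h')
    simp [e1, e2] at h
  · intro s
    have : (a • γ₁ + b • γ₂) s = a * γ₁ s + b * γ₂ s := rfl
    rw [this, h₁γ s, h₂γ s, Finset.mul_sum, Finset.mul_sum, ← Finset.sum_add_distrib]
    apply Finset.sum_congr rfl; intro c _; ring

lemma smdpSet_subset_hull {S C : Type*} [Fintype S] [Fintype C]
    (p : C → ℝ) (q : C → Finset S) :
    smdpSet p q ⊆ convexHull ℝ (smdpDirac p q) := by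
  rintro γ ⟨θ, hθ0, hθ1, hθq, hγ⟩
  set t : Finset (C → S) := Fintype.piFinset q with ht
  set w : (C → S) → ℝ := fun σ => ∏ c, θ c (σ c) with hw
  set z : (C → S) → (S → ℝ) := fun σ s => ∑ c, if σ c = s then p c else 0 with hz
  have hsum_q : ∀ c, ∑ s ∈ q c, θ c s = 1 := by
    intro c
    rw [← hθ1 c]
    exact Finset.sum_subset (Finset.subset_univ _)
      (fun s _ hs => by by_contra h; exact hs (hθq c s h))
  have hwsum : ∑ σ ∈ t, w σ = 1 := by
    rw [ht, hw, ← Finset.prod_univ_sum]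
    simp [hsum_q]
  have hw0 : ∀ σ ∈ t, 0 ≤ w σ :=
    fun σ _ => Finset.prod_nonneg fun c _ => hθ0 c (σ c)
  have hkey : ∀ (c₀ : C) (s : S),
      ∑ σ ∈ t, (if σ c₀ = s then w σ else 0) = θ c₀ s := by
    intro c₀ s
    have hpt : ∀ σ ∈ t, (if σ c₀ = s then w σ else 0) =
        ∏ c, (if c = c₀ then (if σ c = s then θ c (σ c) else 0) else θ c (σ c)) := by
      intro σ _
      by_cases h : σ c₀ = s
      · simp only [h, if_true]
        apply Finset.prod_congr rfl
        intro c _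
        by_cases hc : c = c₀ <;> simp [hc, h]
      · rw [if_neg h]
        symm
        apply Finset.prod_eq_zero (Finset.mem_univ c₀)
        simp [h]
    rw [Finset.sum_congr rfl hpt, ht]
    have hps := Finset.prod_univ_sum q
      (fun c s' => if c = c₀ then (if s' = s then θ c s' else 0) else θ c s')
    rw [← hps, Finset.prod_eq_single c₀ ?_ (by simp)]
    · simp only [if_true]
      have : ∑ s' ∈ q c₀, (if s' = s then θ c₀ s' else 0) =
          if s ∈ q c₀ then θ c₀ s else 0 := Finset.sum_ite_eq' _ _ _
      rw [this]
      by_cases hs : s ∈ q c₀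
      · simp [hs]
      · simp [hs]
        by_contra h'
        exact hs (hθq c₀ s (Ne.symm h'))
    · intro c _ hc
      simp [hc, hsum_q c]
  have hγeq : γ = t.centerMass w z := by
    rw [Finset.centerMass, hwsum, inv_one, one_smul]
    funext s
    rw [hγ s]
    have : (∑ σ ∈ t, w σ • z σ) s = ∑ σ ∈ t, w σ * z σ s := by
      rw [Finset.sum_apply]; rfl
    rw [this]
    have : ∀ σ ∈ t, w σ * z σ s = ∑ c, (if σ c = s then w σ * p c else 0) := by
      intro σ _
      rw [hz, Finset.mul_sum]
      apply Finset.sum_congr rfl; intro c _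
      by_cases h : σ c = s <;> simp [h]
    rw [Finset.sum_congr rfl this, Finset.sum_comm]
    apply Finset.sum_congr rfl
    intro c _
    have : ∑ σ ∈ t, (if σ c = s then w σ * p c else 0) =
        (∑ σ ∈ t, (if σ c = s then w σ else 0)) * p c := by
      rw [Finset.sum_mul]
      apply Finset.sum_congr rfl; intro σ _
      by_cases h : σ c = s <;> simp [h]
    rw [this, hkey c s]
  rw [hγeq]
  apply Finset.centerMass_mem_convexHull t hw0 (by rw [hwsum]; norm_num)
  intro σ hσ
  exact ⟨σ, fun c => Fintype.mem_piFinset.mp hσ c, fun s => rfl⟩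

lemma smdpSet_eq_hull {S C : Type*} [Fintype S] [Fintype C]
    (p : C → ℝ) (q : C → Finset S) :
    smdpSet p q = convexHull ℝ (smdpDirac p q) := by
  refine le_antisymm (smdpSet_subset_hull p q) ?_
  exact convexHull_min (smdpDirac_subset p q) (smdpSet_convex p q)

lemma smdpDirac_finite {S C : Type*} [Fintype S] [Fintype C]
    (p : C → ℝ) (q : C → Finset S) : (smdpDirac p q).Finite := by
  have : smdpDirac p q ⊆
      Set.range (fun σ : C → S => fun s => ∑ c, if σ c = s then p c else 0) := by
    rintro γ ⟨σ, _, hγ⟩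
    exact ⟨σ, by funext s; exact (hγ s).symm⟩
  exact Set.Finite.subset (Set.finite_range _) this

theorem smdp_set_convex_compact_extreme_points
    {S C : Type*} [Fintype S] [Fintype C]
    (p : C → ℝ) (hp0 : ∀ c, 0 ≤ p c) (hp1 : ∑ c, p c = 1)
    (q : C → Finset S) (hq : ∀ c, (q c).Nonempty) :
    (smdpSet p q).Nonempty ∧
    Convex ℝ (smdpSet p q) ∧
    IsCompact (smdpSet p q) ∧
    smdpSet p q ⊆ { γ : S → ℝ | (∀ s, 0 ≤ γ s) ∧ ∑ s, γ s = 1 } ∧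
    Set.extremePoints ℝ (smdpSet p q) ⊆
      { γ : S → ℝ | ∃ σ : C → S, (∀ c, σ c ∈ q c) ∧
          ∀ s, γ s = ∑ c, if σ c = s then p c else 0 } := by
  have hdirac : (smdpDirac p q).Nonempty := by
    choose σ hσ using hq
    exact ⟨fun s => ∑ c, if σ c = s then p c else 0, σ, hσ, fun s => rfl⟩
  refine ⟨?_, smdpSet_convex p q, ?_, ?_, ?_⟩
  · exact hdirac.mono (smdpDirac_subset p q)
  · rw [smdpSet_eq_hull]
    exact (smdpDirac_finite p q).isCompact_convexHull ℝ
  · rintro γ ⟨θ, hθ0, hθ1, _, hγ⟩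
    constructor
    · intro s
      rw [hγ s]
      exact Finset.sum_nonneg fun c _ => mul_nonneg (hθ0 c s) (hp0 c)
    · calc ∑ s, γ s = ∑ s, ∑ c, θ c s * p c := by
            exact Finset.sum_congr rfl fun s _ => hγ s
        _ = ∑ c, (∑ s, θ c s) * p c := by
            rw [Finset.sum_comm]
            exact Finset.sum_congr rfl fun c _ => (Finset.sum_mul _ _ _).symm
        _ = 1 := by simp [hθ1, hp1]
  · rw [smdpSet_eq_hull]
    exact extremePoints_convexHull_subset
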